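/- Let d ≥ 1 be an integer and let β satisfy 0 < β < 1/2. There exists a constant C > 0, depending only on d and β, with the following property: for every finite Borel measure σ on ℝ^d with compact support Γ, every bounded continuous φ : ℝ^d × ℝ → ℝ with |φ| ≤ M everywhere, every x ∈ ℝ^d with δ := dist(x, Γ) > 0, and every t > 0, the spatial gradient of the single-layer heat potential v(x,t) := ∫_0^t ∫ Φ(x,t;y,s) φ(y,s) dσ(y) ds satisfies ‖∇_x v(x,t)‖ ≤ C · M · σ(ℝ^d) · t^{1−β} · δ^{−(d+1−2β)}. -/

import Mathlib

set_option synthInstance.maxHeartbeats 1000000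
set_option maxHeartbeats 4000000

open MeasureTheory

/-- The fundamental solution of the heat equation on `ℝ^d`:
`Φ(x,t;y,s) = (4π(t−s))^{−d/2} exp(−‖x−y‖²/(4(t−s)))` for `t > s`, and `0` for `t ≤ s`. -/
noncomputable def Phi (d : ℕ) (x : EuclideanSpace ℝ (Fin d)) (t : ℝ)
    (y : EuclideanSpace ℝ (Fin d)) (s : ℝ) : ℝ :=
  if t ≤ s then 0
  else (4 * Real.pi * (t - s)) ^ (-(d : ℝ) / 2) * Real.exp (-‖x - y‖ ^ 2 / (4 * (t - s)))

/-- The single-layer heat potential `v(x,t) = ∫_0^t ∫ Φ(x,t;y,s) φ(y,s) dσ(y) ds`. -/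
noncomputable def singleLayer (d : ℕ) (σ : Measure (EuclideanSpace ℝ (Fin d)))
    (φ : EuclideanSpace ℝ (Fin d) → ℝ → ℝ)
    (x : EuclideanSpace ℝ (Fin d)) (t : ℝ) : ℝ :=
  ∫ s in Set.Ioc 0 t, ∫ y, Phi d x t y s * φ y s ∂σ

/-! ### Auxiliary lemmas -/

lemma exp_neg_le_rpow (α : ℝ) (hα : 0 < α) :
    ∃ K : ℝ, 0 < K ∧ ∀ u : ℝ, 0 < u → Real.exp (-u) ≤ K * u ^ (-α) := by
  set n := ⌈α⌉₊ with hn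
  refine ⟨(n.factorial : ℝ), by positivity, fun u hu => ?_⟩
  have key : Real.exp (-u) * u ^ α ≤ (n.factorial : ℝ) := by
    rcases le_or_gt 1 u with h1 | h1
    · have h2 : u ^ α ≤ u ^ (n : ℝ) := Real.rpow_le_rpow_of_exponent_le h1 (Nat.le_ceil α)
      have h3 : (u : ℝ) ^ n ≤ (n.factorial : ℝ) * Real.exp u := by
        rw [← div_le_iff₀' (by positivity)]
        calc u ^ n / (n.factorial : ℝ) ≤ ∑ i ∈ Finset.range (n + 1), u ^ i / (i.factorial : ℝ) := by
              refine Finset.single_le_sum (f := fun i => u ^ i / (i.factorial : ℝ))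
                (fun i _ => by positivity) (Finset.self_mem_range_succ n)
          _ ≤ Real.exp u := Real.sum_le_exp_of_nonneg (le_of_lt hu) _
      calc Real.exp (-u) * u ^ α ≤ Real.exp (-u) * u ^ (n : ℝ) :=
            mul_le_mul_of_nonneg_left h2 (Real.exp_nonneg _)
        _ = Real.exp (-u) * u ^ n := by rw [Real.rpow_natCast]
        _ ≤ Real.exp (-u) * ((n.factorial : ℝ) * Real.exp u) :=
            mul_le_mul_of_nonneg_left h3 (Real.exp_nonneg _)
        _ = (n.factorial : ℝ) * (Real.exp (-u) * Real.exp u) := by ring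
        _ = (n.factorial : ℝ) := by rw [← Real.exp_add]; simp
    · have h2 : u ^ α ≤ 1 := Real.rpow_le_one hu.le h1.le hα.le
      have h3 : Real.exp (-u) ≤ 1 := Real.exp_le_one_iff.mpr (by linarith)
      calc Real.exp (-u) * u ^ α ≤ 1 * 1 :=
            mul_le_mul h3 h2 (Real.rpow_nonneg hu.le _) zero_le_one
        _ ≤ (n.factorial : ℝ) := by
            rw [one_mul]; exact_mod_cast Nat.one_le_iff_ne_zero.mpr (Nat.factorial_ne_zero n)
  have hpow : (0 : ℝ) < u ^ α := Real.rpow_pos_of_pos hu α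
  rw [Real.rpow_neg hu.le, ← div_eq_mul_inv, le_div_iff₀ hpow]
  exact key

lemma gauss_bound (a b c : ℝ) (hc : 0 < c) :
    ∃ K : ℝ, 0 < K ∧ ∀ τ r : ℝ, 0 < τ → 0 < r →
      τ ^ a * r ^ b * Real.exp (-r ^ 2 / (4 * τ)) ≤ K * (τ ^ (a + c) * r ^ (b - 2 * c)) := by
  obtain ⟨K₀, hK₀, hK⟩ := exp_neg_le_rpow c hc
  refine ⟨K₀ * 4 ^ c, by positivity, fun τ r hτ hr => ?_⟩
  have hu : 0 < r ^ 2 / (4 * τ) := by positivity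
  have h1 : Real.exp (-r ^ 2 / (4 * τ)) ≤ K₀ * (r ^ 2 / (4 * τ)) ^ (-c) := by
    rw [neg_div]; exact hK _ hu
  have h2 : (r ^ 2 / (4 * τ)) ^ (-c) = 4 ^ c * (τ ^ c * r ^ (-(2 * c))) := by
    rw [Real.div_rpow (by positivity) (by positivity),
        Real.mul_rpow (by norm_num : (0:ℝ) ≤ 4) hτ.le,
        ← Real.rpow_natCast r 2, ← Real.rpow_mul hr.le,
        show ((2:ℕ):ℝ) * -c = -(2 * c) by push_cast; ring,
        Real.rpow_neg (by norm_num : (0:ℝ) ≤ 4), Real.rpow_neg hτ.le,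
        Real.rpow_neg hr.le]
    have h4 : (0:ℝ) < (4:ℝ) ^ c := Real.rpow_pos_of_pos (by norm_num) c
    have hτc : (0:ℝ) < τ ^ c := Real.rpow_pos_of_pos hτ c
    have hrc : (0:ℝ) < r ^ (2 * c) := Real.rpow_pos_of_pos hr _
    field_simp
  calc τ ^ a * r ^ b * Real.exp (-r ^ 2 / (4 * τ))
      ≤ τ ^ a * r ^ b * (K₀ * (4 ^ c * (τ ^ c * r ^ (-(2 * c))))) := by
        rw [← h2]
        exact mul_le_mul_of_nonneg_left h1 (by positivity)
    _ = (K₀ * 4 ^ c) * ((τ ^ a * τ ^ c) * (r ^ b * r ^ (-(2 * c)))) := by ring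
    _ = (K₀ * 4 ^ c) * (τ ^ (a + c) * r ^ (b - 2 * c)) := by
        rw [← Real.rpow_add hτ, ← Real.rpow_add hr, sub_eq_add_neg]

lemma kernel_bound_zero (d : ℕ) (hd : 1 ≤ d) (β : ℝ) (hβ0 : 0 < β) (hβ : β < 1 / 2) :
    ∃ C : ℝ, 0 < C ∧ ∀ τ r : ℝ, 0 < τ → 0 < r →
      (4 * Real.pi * τ) ^ (-(d : ℝ) / 2) * Real.exp (-r ^ 2 / (4 * τ)) ≤
        C * (τ ^ (-β) * r ^ (-((d : ℝ) - 2 * β))) := by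
  have hc : 0 < (d : ℝ) / 2 - β := by
    have : (1 : ℝ) ≤ (d : ℝ) := by exact_mod_cast hd
    linarith
  obtain ⟨K, hK, hbd⟩ := gauss_bound (-(d : ℝ) / 2) 0 ((d : ℝ) / 2 - β) hc
  refine ⟨(4 * Real.pi) ^ (-(d : ℝ) / 2) * K, by positivity, fun τ r hτ hr => ?_⟩
  have h0 : (4 * Real.pi * τ) ^ (-(d : ℝ) / 2) =
      (4 * Real.pi) ^ (-(d : ℝ) / 2) * τ ^ (-(d : ℝ) / 2) :=
    Real.mul_rpow (by positivity) hτ.le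
  have hb := hbd τ r hτ hr
  rw [Real.rpow_zero, mul_one] at hb
  have he1 : -(d : ℝ) / 2 + ((d : ℝ) / 2 - β) = -β := by ring
  have he2 : (0 : ℝ) - 2 * ((d : ℝ) / 2 - β) = -((d : ℝ) - 2 * β) := by ring
  rw [he1, he2] at hb
  calc (4 * Real.pi * τ) ^ (-(d : ℝ) / 2) * Real.exp (-r ^ 2 / (4 * τ))
      = (4 * Real.pi) ^ (-(d : ℝ) / 2) * (τ ^ (-(d : ℝ) / 2) * Real.exp (-r ^ 2 / (4 * τ))) := by
        rw [h0]; ring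
    _ ≤ (4 * Real.pi) ^ (-(d : ℝ) / 2) * (K * (τ ^ (-β) * r ^ (-((d : ℝ) - 2 * β)))) :=
        mul_le_mul_of_nonneg_left hb (by positivity)
    _ = (4 * Real.pi) ^ (-(d : ℝ) / 2) * K * (τ ^ (-β) * r ^ (-((d : ℝ) - 2 * β))) := by ring

lemma kernel_bound_one (d : ℕ) (hd : 1 ≤ d) (β : ℝ) (hβ0 : 0 < β) (hβ : β < 1 / 2) :
    ∃ C : ℝ, 0 < C ∧ ∀ τ r : ℝ, 0 < τ → 0 < r →
      (4 * Real.pi * τ) ^ (-(d : ℝ) / 2) * Real.exp (-r ^ 2 / (4 * τ)) * (r / (2 * τ)) ≤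
        C * (τ ^ (-β) * r ^ (-((d : ℝ) + 1 - 2 * β))) := by
  have hc : 0 < ((d : ℝ) + 2) / 2 - β := by
    have : (1 : ℝ) ≤ (d : ℝ) := by exact_mod_cast hd
    linarith
  obtain ⟨K, hK, hbd⟩ := gauss_bound (-(d : ℝ) / 2 - 1) 1 (((d : ℝ) + 2) / 2 - β) hc
  refine ⟨(4 * Real.pi) ^ (-(d : ℝ) / 2) * K / 2, by positivity, fun τ r hτ hr => ?_⟩
  have h0 : (4 * Real.pi * τ) ^ (-(d : ℝ) / 2) =
      (4 * Real.pi) ^ (-(d : ℝ) / 2) * τ ^ (-(d : ℝ) / 2) :=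
    Real.mul_rpow (by positivity) hτ.le
  have hb := hbd τ r hτ hr
  rw [Real.rpow_one] at hb
  have he1 : -(d : ℝ) / 2 - 1 + (((d : ℝ) + 2) / 2 - β) = -β := by ring
  have he2 : (1 : ℝ) - 2 * (((d : ℝ) + 2) / 2 - β) = -((d : ℝ) + 1 - 2 * β) := by ring
  rw [he1, he2] at hb
  have hτ1 : τ ^ (-(d : ℝ) / 2) * τ⁻¹ = τ ^ (-(d : ℝ) / 2 - 1) := by
    rw [← Real.rpow_neg_one τ, ← Real.rpow_add hτ, sub_eq_add_neg]
  calc (4 * Real.pi * τ) ^ (-(d : ℝ) / 2) * Real.exp (-r ^ 2 / (4 * τ)) * (r / (2 * τ))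
      = (4 * Real.pi) ^ (-(d : ℝ) / 2) / 2 *
          (τ ^ (-(d : ℝ) / 2 - 1) * r * Real.exp (-r ^ 2 / (4 * τ))) := by
        rw [h0, ← hτ1]; field_simp
    _ ≤ (4 * Real.pi) ^ (-(d : ℝ) / 2) / 2 *
          (K * (τ ^ (-β) * r ^ (-((d : ℝ) + 1 - 2 * β)))) :=
        mul_le_mul_of_nonneg_left hb (by positivity)
    _ = (4 * Real.pi) ^ (-(d : ℝ) / 2) * K / 2 *
          (τ ^ (-β) * r ^ (-((d : ℝ) + 1 - 2 * β))) := by ring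

/-- The spatial Fréchet derivative of `z ↦ Phi d z t y s * c` (for `s < t`). -/
noncomputable def PhiD (d : ℕ) (t s : ℝ) (y : EuclideanSpace ℝ (Fin d)) (c : ℝ)
    (z : EuclideanSpace ℝ (Fin d)) : EuclideanSpace ℝ (Fin d) →L[ℝ] ℝ :=
  (c * ((4 * Real.pi * (t - s)) ^ (-(d : ℝ) / 2) *
      Real.exp (-‖z - y‖ ^ 2 / (4 * (t - s))) * (-(4 * (t - s))⁻¹) * 2)) •
    innerSL ℝ (z - y)

lemma phi_hasFDerivAt (d : ℕ) (t s : ℝ) (hst : s < t) (y : EuclideanSpace ℝ (Fin d)) (c : ℝ)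
    (z : EuclideanSpace ℝ (Fin d)) :
    HasFDerivAt (fun w => Phi d w t y s * c) (PhiD d t s y c z) z := by
  have hτ : 0 < t - s := sub_pos.mpr hst
  have hfun : (fun w => Phi d w t y s * c) =
      fun w => (4 * Real.pi * (t - s)) ^ (-(d : ℝ) / 2) *
        Real.exp (-(4 * (t - s))⁻¹ * ‖w - y‖ ^ 2) * c := by
    funext w
    rw [Phi, if_neg (not_le.mpr hst)]
    congr 2
    ring
  rw [hfun]
  have h1 := ((hasFDerivAt_id z).sub_const y).norm_sq
  have h2 := h1.const_mul (-(4 * (t - s))⁻¹)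
  have h3 := h2.exp
  have h4 := h3.const_mul ((4 * Real.pi * (t - s)) ^ (-(d : ℝ) / 2))
  have h5 := h4.mul_const c
  have harg : -(4 * (t - s))⁻¹ * ‖z - y‖ ^ 2 = -‖z - y‖ ^ 2 / (4 * (t - s)) := by ring
  refine HasFDerivAt.congr_fderiv h5 ?_
  unfold PhiD
  simp only [id_eq] at *
  rw [harg]
  ext w
  simp only [ContinuousLinearMap.smul_apply, ContinuousLinearMap.coe_comp',
    ContinuousLinearMap.coe_id', Function.comp_apply, id_eq, smul_eq_mul,
    ContinuousLinearMap.coe_smul', Pi.smul_apply, map_sub, ContinuousLinearMap.coe_sub',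
    Pi.sub_apply, nsmul_eq_mul, Nat.cast_ofNat]
  ring

lemma phiD_norm (d : ℕ) (t s : ℝ) (y : EuclideanSpace ℝ (Fin d)) (c : ℝ)
    (z : EuclideanSpace ℝ (Fin d)) :
    ‖PhiD d t s y c z‖ =
      |c| * (|(4 * Real.pi * (t - s)) ^ (-(d : ℝ) / 2)| *
        Real.exp (-‖z - y‖ ^ 2 / (4 * (t - s))) * |(4 * (t - s))⁻¹| * 2) * ‖z - y‖ := by
  rw [PhiD]
  rw [norm_smul (α := ℝ) (β := EuclideanSpace ℝ (Fin d) →L[ℝ] ℝ), innerSL_apply_norm]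
  simp only [Real.norm_eq_abs]
  rw [abs_mul, abs_mul, abs_mul, abs_mul]
  rw [abs_of_pos (Real.exp_pos _), abs_neg]
  norm_num

lemma integrable_fst_prod {α β : Type*} [MeasurableSpace α] [MeasurableSpace β]
    {μ : Measure α} {ν : Measure β} [SFinite ν] [IsFiniteMeasure ν] {g : α → ℝ}
    (hg : Integrable g μ) : Integrable (fun q : α × β => g q.1) (μ.prod ν) := by
  refine (integrable_prod_iff hg.1.comp_fst).mpr ⟨?_, ?_⟩
  · exact Filter.Eventually.of_forall fun s => (integrable_const (g s) : Integrable (fun _ => g s) ν)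
  · have h : (fun s => ∫ _y, ‖g s‖ ∂ν) = fun s => (ν Set.univ).toReal * ‖g s‖ := by
      funext s; rw [integral_const, smul_eq_mul]; rfl
    rw [h]
    exact hg.norm.const_mul _
/-- Pointwise gradient bound for the single-layer potential:
`‖∇_x v(x,t)‖ ≤ C M σ(ℝ^d) t^{1−β} δ^{−(d+1−2β)}` with `δ = dist(x, Γ)`. -/
theorem singleLayer_gradient_bound (d : ℕ) (hd : 1 ≤ d) (β : ℝ)
    (hβ0 : 0 < β) (hβ : β < 1 / 2) :
    ∃ C : ℝ, 0 < C ∧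
      ∀ (σ : Measure (EuclideanSpace ℝ (Fin d))) (_ : IsFiniteMeasure σ)
        (Γ : Set (EuclideanSpace ℝ (Fin d))), IsCompact Γ → σ Γᶜ = 0 →
        ∀ (φ : EuclideanSpace ℝ (Fin d) → ℝ → ℝ),
          (Continuous fun p : EuclideanSpace ℝ (Fin d) × ℝ => φ p.1 p.2) →
          ∀ M : ℝ, (∀ y s, |φ y s| ≤ M) →
          ∀ x : EuclideanSpace ℝ (Fin d), 0 < Metric.infDist x Γ →
          ∀ t : ℝ, 0 < t →
            ‖fderiv ℝ (fun z => singleLayer d σ φ z t) x‖ ≤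
              C * M * (σ Set.univ).toReal * t ^ (1 - β) *
                (Metric.infDist x Γ) ^ (-((d : ℝ) + 1 - 2 * β)) := by
  have hd1 : (1 : ℝ) ≤ (d : ℝ) := by exact_mod_cast hd
  have h1β : 0 < 1 - β := by linarith
  obtain ⟨C₀, hC₀, hker0⟩ := kernel_bound_zero d hd β hβ0 hβ
  obtain ⟨C₁, hC₁, hker1⟩ := kernel_bound_one d hd β hβ0 hβ
  refine ⟨C₁ * 2 ^ ((d : ℝ) + 1 - 2 * β) / (1 - β), by positivity, ?_⟩
  intro σ hσfin Γ hΓcomp hΓnull φ hφcont M hM x hδ t ht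
  haveI := hσfin
  set δ := Metric.infDist x Γ with hδdef
  set p := (d : ℝ) + 1 - 2 * β with hpdef
  have hp0 : 0 < p := by rw [hpdef]; linarith
  have hq0 : 0 < (d : ℝ) - 2 * β := by linarith
  have hε : 0 < δ / 2 := by positivity
  have hM0 : 0 ≤ M := (abs_nonneg _).trans (hM 0 0)
  set μ := (volume.restrict (Set.Ioc (0 : ℝ) t)).prod σ with hμdef
  set F : EuclideanSpace ℝ (Fin d) → ℝ × EuclideanSpace ℝ (Fin d) → ℝ :=
    fun z q => Phi d z t q.2 q.1 * φ q.2 q.1 with hFdef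
  set F' : EuclideanSpace ℝ (Fin d) → ℝ × EuclideanSpace ℝ (Fin d) →
      (EuclideanSpace ℝ (Fin d) →L[ℝ] ℝ) :=
    fun z q => PhiD d t q.1 q.2 (φ q.2 q.1) z with hF'def
  -- the a.e. event on which everything is nice
  have hae : ∀ᵐ q ∂μ, q.1 ∈ Set.Ioo 0 t ∧ q.2 ∈ Γ := by
    rw [MeasureTheory.ae_iff]
    have hsub : {q : ℝ × EuclideanSpace ℝ (Fin d) | ¬(q.1 ∈ Set.Ioo 0 t ∧ q.2 ∈ Γ)}
        ⊆ ((Set.Ioo (0 : ℝ) t)ᶜ ×ˢ Set.univ) ∪ (Set.univ ×ˢ Γᶜ) := by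
      intro q hq
      by_cases h1 : q.1 ∈ Set.Ioo 0 t
      · right; exact ⟨Set.mem_univ _, fun hΓy => hq ⟨h1, hΓy⟩⟩
      · left; exact ⟨h1, Set.mem_univ _⟩
    refine measure_mono_null hsub (measure_union_null ?_ ?_)
    · rw [hμdef, Measure.prod_prod]
      have hres : (volume.restrict (Set.Ioc (0 : ℝ) t)) ((Set.Ioo (0 : ℝ) t)ᶜ) = 0 := by
        rw [Measure.restrict_apply measurableSet_Ioo.compl]
        have hsub2 : (Set.Ioo (0 : ℝ) t)ᶜ ∩ Set.Ioc 0 t ⊆ {t} := by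
          rintro s ⟨hs1, hs2⟩
          simp only [Set.mem_compl_iff, Set.mem_Ioo, not_and, not_lt] at hs1
          exact Set.mem_singleton_iff.mpr (le_antisymm hs2.2 (hs1 hs2.1))
        exact measure_mono_null hsub2 Real.volume_singleton
      rw [hres, zero_mul]
    · rw [hμdef, Measure.prod_prod, hΓnull, mul_zero]
  -- geometry: points of the ball are at distance ≥ δ/2 from Γ
  have hgeom : ∀ z ∈ Metric.ball x (δ / 2), ∀ y ∈ Γ, δ / 2 ≤ ‖z - y‖ := by
    intro z hz y hy
    have h1 : δ ≤ dist x y := Metric.infDist_le_dist_of_mem hy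
    have h2 : dist z x < δ / 2 := Metric.mem_ball.mp hz
    have h3 : dist x y ≤ dist x z + dist z y := dist_triangle x z y
    have h4 : dist x z = dist z x := dist_comm x z
    have h5 : dist z y = ‖z - y‖ := dist_eq_norm z y
    linarith
  -- integrability of the time factor
  have hsInt : IntegrableOn (fun s => (t - s) ^ (-β)) (Set.Ioc 0 t) volume := by
    have h1 : IntervalIntegrable (fun u : ℝ => u ^ (-β)) volume 0 t :=
      intervalIntegral.intervalIntegrable_rpow' (by linarith)
    have h2 := (h1.comp_sub_left t).symm
    rw [sub_zero, sub_self] at h2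
    exact (intervalIntegrable_iff_integrableOn_Ioc_of_le ht.le).mp h2
  -- measurability of F z
  have hmeasF : ∀ z, AEStronglyMeasurable (F z) μ := by
    intro z
    rw [hFdef]
    apply Measurable.aestronglyMeasurable
    apply Measurable.mul
    · show Measurable fun q : ℝ × EuclideanSpace ℝ (Fin d) => Phi d z t q.2 q.1
      unfold Phi
      apply Measurable.ite (measurableSet_le measurable_const measurable_fst) measurable_const
      apply Measurable.mul <;> fun_prop
    · exact (hφcont.comp (continuous_snd.prodMk continuous_fst)).measurable
  -- measurability of F' x
  have hF'meas : AEStronglyMeasurable (F' x) μ := by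
    rw [hF'def]
    unfold PhiD
    have hcont : Continuous fun q : ℝ × EuclideanSpace ℝ (Fin d) => innerSL ℝ (x - q.2) :=
      (innerSL ℝ).continuous.comp (continuous_const.sub continuous_snd)
    have hφm : Measurable fun q : ℝ × EuclideanSpace ℝ (Fin d) => φ q.2 q.1 :=
      (hφcont.comp (continuous_snd.prodMk continuous_fst)).measurable
    have hscal : Measurable fun q : ℝ × EuclideanSpace ℝ (Fin d) =>
        φ q.2 q.1 * ((4 * Real.pi * (t - q.1)) ^ (-(d : ℝ) / 2) *
          Real.exp (-‖x - q.2‖ ^ 2 / (4 * (t - q.1))) * (-(4 * (t - q.1))⁻¹) * 2) := by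
      apply hφm.mul
      apply Measurable.mul
      apply Measurable.mul
      · fun_prop
      · fun_prop
      · fun_prop
    exact hscal.aestronglyMeasurable.smul hcont.aestronglyMeasurable
  -- integrability of F z for z in the ball
  have hFint : ∀ z ∈ Metric.ball x (δ / 2), Integrable (F z) μ := by
    intro z hz
    refine Integrable.mono'
      (g := fun q : ℝ × EuclideanSpace ℝ (Fin d) =>
        M * C₀ * (δ / 2) ^ (-((d : ℝ) - 2 * β)) * (t - q.1) ^ (-β))
      (integrable_fst_prod (hsInt.const_mul _)) (hmeasF z) ?_
    filter_upwards [hae] with q hq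
    obtain ⟨⟨hs0, hst⟩, hyΓ⟩ := hq
    have hτ : 0 < t - q.1 := by linarith
    have hrge : δ / 2 ≤ ‖z - q.2‖ := hgeom z hz q.2 hyΓ
    have hr : 0 < ‖z - q.2‖ := lt_of_lt_of_le hε hrge
    have hbase : 0 < 4 * Real.pi * (t - q.1) :=
      mul_pos (by positivity : (0 : ℝ) < 4 * Real.pi) hτ
    have hκ0 : 0 ≤ (4 * Real.pi * (t - q.1)) ^ (-(d : ℝ) / 2) := Real.rpow_nonneg hbase.le _
    have hPhi : Phi d z t q.2 q.1 = (4 * Real.pi * (t - q.1)) ^ (-(d : ℝ) / 2) *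
        Real.exp (-‖z - q.2‖ ^ 2 / (4 * (t - q.1))) := by
      rw [Phi, if_neg (not_le.mpr hst)]
    rw [hFdef]
    simp only [Real.norm_eq_abs]
    rw [abs_mul, hPhi, abs_of_nonneg (mul_nonneg hκ0 (Real.exp_nonneg _))]
    calc (4 * Real.pi * (t - q.1)) ^ (-(d : ℝ) / 2) *
          Real.exp (-‖z - q.2‖ ^ 2 / (4 * (t - q.1))) * |φ q.2 q.1|
        ≤ (C₀ * ((t - q.1) ^ (-β) * ‖z - q.2‖ ^ (-((d : ℝ) - 2 * β)))) * M :=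
          mul_le_mul (hker0 (t - q.1) ‖z - q.2‖ hτ hr) (hM _ _) (abs_nonneg _)
            (by positivity)
      _ ≤ (C₀ * ((t - q.1) ^ (-β) * (δ / 2) ^ (-((d : ℝ) - 2 * β)))) * M := by
          refine mul_le_mul_of_nonneg_right (mul_le_mul_of_nonneg_left
            (mul_le_mul_of_nonneg_left ?_ (Real.rpow_nonneg hτ.le _)) hC₀.le) hM0
          exact Real.rpow_le_rpow_of_nonpos hε hrge (by linarith)
      _ = M * C₀ * (δ / 2) ^ (-((d : ℝ) - 2 * β)) * (t - q.1) ^ (-β) := by ring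
  -- the uniform derivative bound
  set B : ℝ × EuclideanSpace ℝ (Fin d) → ℝ :=
    fun q => M * C₁ * (δ / 2) ^ (-p) * (t - q.1) ^ (-β) with hBdef
  have hBint : Integrable B μ := by
    rw [hBdef]
    exact integrable_fst_prod (hsInt.const_mul _)
  have hF'bd : ∀ᵐ q ∂μ, ∀ z ∈ Metric.ball x (δ / 2), ‖F' z q‖ ≤ B q := by
    filter_upwards [hae] with q hq z hz
    obtain ⟨⟨hs0, hst⟩, hyΓ⟩ := hq
    have hτ : 0 < t - q.1 := by linarith
    have hrge : δ / 2 ≤ ‖z - q.2‖ := hgeom z hz q.2 hyΓ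
    have hr : 0 < ‖z - q.2‖ := lt_of_lt_of_le hε hrge
    have hbase : 0 < 4 * Real.pi * (t - q.1) :=
      mul_pos (by positivity : (0 : ℝ) < 4 * Real.pi) hτ
    have hκ0 : 0 ≤ (4 * Real.pi * (t - q.1)) ^ (-(d : ℝ) / 2) := Real.rpow_nonneg hbase.le _
    rw [hF'def]
    rw [phiD_norm, abs_of_nonneg hκ0, abs_of_nonneg (by positivity : (0:ℝ) ≤ (4 * (t - q.1))⁻¹)]
    have hXeq : |φ q.2 q.1| * ((4 * Real.pi * (t - q.1)) ^ (-(d : ℝ) / 2) *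
          Real.exp (-‖z - q.2‖ ^ 2 / (4 * (t - q.1))) * (4 * (t - q.1))⁻¹ * 2) * ‖z - q.2‖
        = |φ q.2 q.1| * ((4 * Real.pi * (t - q.1)) ^ (-(d : ℝ) / 2) *
          Real.exp (-‖z - q.2‖ ^ 2 / (4 * (t - q.1))) * (‖z - q.2‖ / (2 * (t - q.1)))) := by
      field_simp
      ring
    rw [hXeq]
    have hX0 : 0 ≤ ‖z - q.2‖ / (2 * (t - q.1)) := div_nonneg (norm_nonneg _) (by linarith)
    calc |φ q.2 q.1| * ((4 * Real.pi * (t - q.1)) ^ (-(d : ℝ) / 2) *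
          Real.exp (-‖z - q.2‖ ^ 2 / (4 * (t - q.1))) * (‖z - q.2‖ / (2 * (t - q.1))))
        ≤ M * (C₁ * ((t - q.1) ^ (-β) * ‖z - q.2‖ ^ (-p))) := by
          refine mul_le_mul (hM _ _) ?_
            (mul_nonneg (mul_nonneg hκ0 (Real.exp_nonneg _)) hX0) hM0
          rw [hpdef]
          exact hker1 (t - q.1) ‖z - q.2‖ hτ hr
      _ ≤ M * (C₁ * ((t - q.1) ^ (-β) * (δ / 2) ^ (-p))) := by
          refine mul_le_mul_of_nonneg_left (mul_le_mul_of_nonneg_left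
            (mul_le_mul_of_nonneg_left ?_ (Real.rpow_nonneg hτ.le _)) hC₁.le) hM0
          exact Real.rpow_le_rpow_of_nonpos hε hrge (by linarith)
      _ = B q := by rw [hBdef]; ring
  -- differentiability
  have h_diff : ∀ᵐ q ∂μ, ∀ z ∈ Metric.ball x (δ / 2),
      HasFDerivAt (fun w => F w q) (F' z q) z := by
    filter_upwards [hae] with q hq z _
    simp only [hFdef, hF'def]
    exact phi_hasFDerivAt d t q.1 hq.1.2 q.2 (φ q.2 q.1) z
  -- differentiation under the integral sign
  have hDeriv : HasFDerivAt (fun z => ∫ q, F z q ∂μ) (∫ q, F' x q ∂μ) x :=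
    hasFDerivAt_integral_of_dominated_of_fderiv_le (Metric.ball_mem_nhds x hε)
      (Filter.Eventually.of_forall hmeasF) (hFint x (Metric.mem_ball_self hε))
      hF'meas hF'bd hBint h_diff
  -- rewrite singleLayer as a product integral near x
  have hEq : (fun z => singleLayer d σ φ z t) =ᶠ[nhds x] (fun z => ∫ q, F z q ∂μ) := by
    filter_upwards [Metric.ball_mem_nhds x hε] with z hz
    rw [singleLayer, hμdef, integral_prod _ (hFint z hz)]
  have hfd : fderiv ℝ (fun z => singleLayer d σ φ z t) x = ∫ q, F' x q ∂μ := by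
    rw [hEq.fderiv_eq, hDeriv.fderiv]
  rw [hfd]
  have hnorm : ‖∫ q, F' x q ∂μ‖ ≤ ∫ q, B q ∂μ := by
    refine norm_integral_le_of_norm_le hBint ?_
    filter_upwards [hF'bd] with q hq using hq x (Metric.mem_ball_self hε)
  refine hnorm.trans ?_
  -- compute the bound integral
  have hIone : ∫ s in Set.Ioc (0 : ℝ) t, (t - s) ^ (-β) = t ^ (1 - β) / (1 - β) := by
    rw [← intervalIntegral.integral_of_le ht.le,
        intervalIntegral.integral_comp_sub_left (fun u => u ^ (-β)) t,
        sub_self, sub_zero, integral_rpow (Or.inl (by linarith)),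
        Real.zero_rpow (by linarith : -β + 1 ≠ 0)]
    rw [show -β + 1 = 1 - β by ring, sub_zero]
  have hIcalc : ∫ q, B q ∂μ
      = M * C₁ * (δ / 2) ^ (-p) * ((σ Set.univ).toReal * (t ^ (1 - β) / (1 - β))) := by
    rw [hBdef, hμdef, integral_prod _ (integrable_fst_prod (hsInt.const_mul _))]
    simp only [integral_const, smul_eq_mul]
    rw [integral_const_mul, integral_const_mul, hIone]
    simp only [measureReal_def]; ring
  rw [hIcalc]
  have hε2 : (δ / 2) ^ (-p) = 2 ^ p * δ ^ (-p) := by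
    rw [Real.div_rpow hδ.le (by norm_num : (0:ℝ) ≤ 2), Real.rpow_neg hδ.le,
        Real.rpow_neg (by norm_num : (0:ℝ) ≤ 2)]
    have h2p : (0:ℝ) < 2 ^ p := Real.rpow_pos_of_pos two_pos p
    have hδp : (0:ℝ) < δ ^ p := Real.rpow_pos_of_pos hδ p
    field_simp
  refine le_of_eq ?_
  rw [hε2]
  field_simp
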